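/- For each ordered pair (i,j) of distinct elements of {0,t,1} with third element k, define G_{ij}: ℂ³ × ℂ⁴ → ℂ³ × ℂ⁴ by G_{ij}(X, a) = (Y, a') where Y_i = X_j, Y_j = X_i − F_{X_i}(X;a), Y_k = X_k, and a' is a with a_i, a_j swapped. Then for every (X,a) with F(X;a) = 0 and every permutation (i,j,k) of (0,t,1): (1) G_{ij}(G_{ji}(X,a)) = (X,a); (2) the braid relation G_{ij}∘G_{jk}∘G_{ij}(X,a) = G_{jk}∘G_{ij}∘G_{jk}(X,a) holds; (3) G_{ki}(X,a) = G_{ji}∘G_{jk}∘G_{ij}(X,a). -/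
import Mathlib


noncomputable section

/-- The Fricke polynomial `F(X; a)` of the Painlevé VI character variety, where
the indices `0, 1, 2` of `Fin 3` stand for the labels `0, t, 1`, and `aI = a_∞`. -/
def Fr (X a : Fin 3 → ℂ) (aI : ℂ) : ℂ :=
  X 0 * X 1 * X 2 + X 0 ^ 2 + X 1 ^ 2 + X 2 ^ 2
    - (a 0 * aI + a 1 * a 2) * X 0 - (a 1 * aI + a 2 * a 0) * X 1 - (a 2 * aI + a 0 * a 1) * X 2
    + (a 0 * a 1 * a 2 * aI + a 0 ^ 2 + a 1 ^ 2 + a 2 ^ 2 + aI ^ 2 - 4)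

/-- The partial derivative `F_{X_i} = X_j X_k + 2 X_i - θ_i` of the Fricke polynomial,
for `(i,j,k)` a permutation of the three indices. -/
def FrD (X a : Fin 3 → ℂ) (aI : ℂ) (i j k : Fin 3) : ℂ :=
  X j * X k + 2 * X i - (a i * aI + a j * a k)

/-- The half-monodromy map `G_{ij}` on pairs `(X, a)` (the parameter `a_∞ = aI` is fixed):
`Y_i = X_j`, `Y_j = X_i − F_{X_i}(X;a)`, `Y_k = X_k`, and `a_i, a_j` are swapped.
Here `(i,j,k)` is a permutation of the three indices. -/
def G (aI : ℂ) (i j k : Fin 3) (p : (Fin 3 → ℂ) × (Fin 3 → ℂ)) :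
    (Fin 3 → ℂ) × (Fin 3 → ℂ) :=
  (fun l => if l = i then p.1 j else if l = j then p.1 i - FrD p.1 p.2 aI i j k else p.1 l,
   fun l => if l = i then p.2 j else if l = j then p.2 i else p.2 l)

set_option maxHeartbeats 4000000 in
/-- **Braid group relations for the half-monodromy maps** on the PVI character variety:
on `{F(X;a) = 0}`, for any permutation `(i,j,k) = (σ 0, σ 1, σ 2)` of the labels `(0,t,1)`,
(1) `G_{ij} ∘ G_{ji} = id`; (2) `G_{ij} ∘ G_{jk} ∘ G_{ij} = G_{jk} ∘ G_{ij} ∘ G_{jk}`;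
(3) `G_{ki} = G_{ji} ∘ G_{jk} ∘ G_{ij}`. -/
theorem half_monodromy_braid_relations
    (aI : ℂ) (σ : Equiv.Perm (Fin 3)) (X a : Fin 3 → ℂ) (h : Fr X a aI = 0) :
    G aI (σ 0) (σ 1) (σ 2) (G aI (σ 1) (σ 0) (σ 2) (X, a)) = (X, a) ∧
    G aI (σ 0) (σ 1) (σ 2) (G aI (σ 1) (σ 2) (σ 0) (G aI (σ 0) (σ 1) (σ 2) (X, a))) =
      G aI (σ 1) (σ 2) (σ 0) (G aI (σ 0) (σ 1) (σ 2) (G aI (σ 1) (σ 2) (σ 0) (X, a))) ∧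
    G aI (σ 2) (σ 0) (σ 1) (X, a) =
      G aI (σ 1) (σ 0) (σ 2) (G aI (σ 1) (σ 2) (σ 0) (G aI (σ 0) (σ 1) (σ 2) (X, a))) := by
  obtain ⟨i, j, k, h0, h1, h2, hij, hjk, hik⟩ :
      ∃ i j k : Fin 3, σ 0 = i ∧ σ 1 = j ∧ σ 2 = k ∧ i ≠ j ∧ j ≠ k ∧ i ≠ k :=
    ⟨_, _, _, rfl, rfl, rfl, σ.injective.ne (by decide), σ.injective.ne (by decide),
      σ.injective.ne (by decide)⟩
  rw [h0, h1, h2]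
  clear h0 h1 h2 h
  fin_cases i <;> fin_cases j <;> fin_cases k <;>
    first
    | exact absurd rfl hij
    | exact absurd rfl hjk
    | exact absurd rfl hik
    | (refine ⟨?_, ?_, ?_⟩ <;> rw [Prod.ext_iff] <;> constructor <;> funext l <;> fin_cases l <;>
        simp only [G, FrD] <;>
        norm_num only [Fin.ext_iff, Fin.val_zero, Fin.val_one, Fin.val_two, if_true, if_false] <;>
        ring)
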